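/- Let a, b, c, d ∈ ℂ. For f : ℂ → ℂ define h : ℂ → ℂ by h(z) = f(iz/2). Then there exists a constant κ ∈ ℂ, independent of f and x (explicitly κ = (c+d)(a+b−1)), such that for every f and every x ∈ ℂ with 2ix ∉ {0, 1, −1}: (μ*^{(a,b,c,d)}(μ^{(a,b,c,d)}h))(−2ix) = B(x)·(f(x+i) − f(x)) + D(x)·(f(x−i) − f(x)) + κ·f(x), where B(x) = (a−ix)(b−ix)(c−ix)(d−ix)/(2ix(2ix−1)) and D(x) = (a+ix)(b+ix)(c+ix)(d+ix)/(2ix(2ix+1)). That is, the conjugation of Q = μ*^{(a,b,c,d)}μ^{(a,b,c,d)} by the grid scaling x ↦ −2ix is, up to an additive constant, the Wilson difference operator. -/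

import Mathlib

open Complex

noncomputable section

/-- The S–Heun lowering operator L on the quadratic grid λ_x = x². -/
def opL (f : ℂ → ℂ) : ℂ → ℂ := fun x => (f (x + 1) - f (x - 1)) / (4 * x)

/-- The stabilizing S–Heun operator M₁ on the quadratic grid. -/
def opM1 (f : ℂ → ℂ) : ℂ → ℂ :=
  fun x => ((2 * x - 1) * f (x + 1) + (2 * x + 1) * f (x - 1)) / (4 * x)

/-- The stabilizing S–Heun operator M₂ on the quadratic grid. -/
def opM2 (f : ℂ → ℂ) : ℂ → ℂ :=
  fun x => ((x ^ 2 + (x - 1) ^ 2) * f (x + 1) - ((x + 1) ^ 2 + x ^ 2) * f (x - 1)) / (4 * x)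

/-- The raising S–Heun operator R₁ = λ_x M₁ on the quadratic grid. -/
def opR1 (f : ℂ → ℂ) : ℂ → ℂ := fun x => x ^ 2 * opM1 f x

/-- The raising S–Heun operator R₂ = λ_x M₂ on the quadratic grid. -/
def opR2 (f : ℂ → ℂ) : ℂ → ℂ := fun x => x ^ 2 * opM2 f x

/-- The contiguity operator μ^{(a,b,c,d)} = uL + vM₁ + ½M₂,
u = ((4a−1)(4b−1)−1)/4, v = a+b−½. -/
def opMu (a b c d : ℂ) (f : ℂ → ℂ) : ℂ → ℂ :=
  fun x => (((4 * a - 1) * (4 * b - 1) - 1) / 4) * opL f x + (a + b - 1 / 2) * opM1 f x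
    + (1 / 2) * opM2 f x

/-- The contiguity operator μ*^{(a,b,c,d)} = μ^{(c+½,d+½,a−½,b−½)}. -/
def opMuStar (a b c d : ℂ) : (ℂ → ℂ) → ℂ → ℂ :=
  opMu (c + 1 / 2) (d + 1 / 2) (a - 1 / 2) (b - 1 / 2)

set_option maxRecDepth 8000 in
lemma muForm (p q r s : ℂ) (g : ℂ → ℂ) (x : ℂ) :
    opMu p q r s g x
      = ((((4*p-1)*(4*q-1)-1)/4 + (p+q-1/2)*(2*x-1) + (1/2)*(x^2+(x-1)^2)) * g (x+1)
        + (-(((4*p-1)*(4*q-1)-1)/4) + (p+q-1/2)*(2*x+1) - (1/2)*((x+1)^2+x^2)) * g (x-1))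
        / (4*x) := by
  simp only [opMu, opL, opM1, opM2]
  ring

lemma muMul (p q r s : ℂ) (g : ℂ → ℂ) (x : ℂ) (hx : x ≠ 0) :
    (4*x) * opMu p q r s g x
      = (((4*p-1)*(4*q-1)-1)/4 + (p+q-1/2)*(2*x-1) + (1/2)*(x^2+(x-1)^2)) * g (x+1)
        + (-(((4*p-1)*(4*q-1)-1)/4) + (p+q-1/2)*(2*x+1) - (1/2)*((x+1)^2+x^2)) * g (x-1) := by
  rw [muForm, mul_div_cancel₀]
  exact mul_ne_zero (by norm_num) hx

set_option maxHeartbeats 1000000 in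
set_option maxRecDepth 8000 in
lemma aux9 (a b c d : ℂ) (g : ℂ → ℂ) (y : ℂ) (h0 : y ≠ 0) (hp : y + 1 ≠ 0) (hm : y - 1 ≠ 0) :
    opMuStar a b c d (opMu a b c d g) y
      = ((a + y/2) * (b + y/2) * (c + y/2) * (d + y/2) / (y * (y + 1))) * (g (y+2) - g y)
        + ((a - y/2) * (b - y/2) * (c - y/2) * (d - y/2) / (y * (y - 1))) * (g (y-2) - g y)
        + (c + d) * (a + b - 1) * g y := by
  have H0 := muMul (c + 1/2) (d + 1/2) (a - 1/2) (b - 1/2) (opMu a b c d g) y h0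
  have H1 := muMul a b c d g (y+1) hp
  have H2 := muMul a b c d g (y-1) hm
  rw [show y+1+1 = y+2 from by ring, show y+1-1 = y from by ring] at H1
  rw [show y-1+1 = y from by ring, show y-1-1 = y-2 from by ring] at H2
  have J1 : (a + y/2) * (b + y/2) * (c + y/2) * (d + y/2) / (y * (y + 1)) * (y * (y + 1))
      = (a + y/2) * (b + y/2) * (c + y/2) * (d + y/2) :=
    div_mul_cancel₀ _ (mul_ne_zero h0 hp)
  have J2 : (a - y/2) * (b - y/2) * (c - y/2) * (d - y/2) / (y * (y - 1)) * (y * (y - 1))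
      = (a - y/2) * (b - y/2) * (c - y/2) * (d - y/2) :=
    div_mul_cancel₀ _ (mul_ne_zero h0 hm)
  show opMu (c + 1/2) (d + 1/2) (a - 1/2) (b - 1/2) (opMu a b c d g) y = _
  apply mul_left_cancel₀ (mul_ne_zero (mul_ne_zero h0 hp) hm :
    y * (y + 1) * (y - 1) ≠ 0)
  linear_combination ((y+1)*(y-1)/4) * H0
    + ((y-1)/16 * ((((4*(c+1/2)-1)*(4*(d+1/2)-1)-1)/4 + ((c+1/2)+(d+1/2)-1/2)*(2*y-1)
        + (1/2)*(y^2+(y-1)^2)))) * H1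
    + ((y+1)/16 * ((-(((4*(c+1/2)-1)*(4*(d+1/2)-1)-1)/4) + ((c+1/2)+(d+1/2)-1/2)*(2*y+1)
        - (1/2)*((y+1)^2+y^2)))) * H2
    - ((y-1) * (g (y+2) - g y)) * J1
    - ((y+1) * (g (y-2) - g y)) * J2

/-- the conjugation of Q = μ*^{(a,b,c,d)}μ^{(a,b,c,d)} by the grid
scaling x ↦ −2ix is, up to the additive constant κ = (c+d)(a+b−1), the Wilson
difference operator. -/
theorem stmt9 (a b c d : ℂ) :
    ∃ κ : ℂ, κ = (c + d) * (a + b - 1) ∧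
      ∀ f : ℂ → ℂ, ∀ x : ℂ,
        2 * I * x ≠ 0 → 2 * I * x ≠ 1 → 2 * I * x ≠ -1 →
          opMuStar a b c d (opMu a b c d (fun z => f (I * z / 2))) (-2 * I * x)
            = ((a - I * x) * (b - I * x) * (c - I * x) * (d - I * x)
                  / (2 * I * x * (2 * I * x - 1))) * (f (x + I) - f x)
              + ((a + I * x) * (b + I * x) * (c + I * x) * (d + I * x)
                  / (2 * I * x * (2 * I * x + 1))) * (f (x - I) - f x)
              + κ * f x := by
  refine ⟨(c + d) * (a + b - 1), rfl, ?_⟩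
  intro f x hx0 hx1 hxm1
  have h0 : (-2 * I * x : ℂ) ≠ 0 := fun h => hx0 (by linear_combination -h)
  have hp : (-2 * I * x + 1 : ℂ) ≠ 0 := fun h => hx1 (by linear_combination -h)
  have hm : (-2 * I * x - 1 : ℂ) ≠ 0 := fun h => hxm1 (by linear_combination -h)
  have key := aux9 a b c d (fun z => f (I * z / 2)) (-2 * I * x) h0 hp hm
  rw [show I * (-2 * I * x + 2) / 2 = x + I from by linear_combination (-x) * I_mul_I,
      show I * (-2 * I * x) / 2 = x from by linear_combination (-x) * I_mul_I,
      show I * (-2 * I * x - 2) / 2 = x - I from by linear_combination (-x) * I_mul_I] at key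
  rw [key]
  ring
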